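/- Let ℓ : [0,1] → [0,1] be continuous and convex with ℓ(0) = 0 and ℓ(1) = 1, and let m > 0. Define q : [0,1) → ℝ₊ by q(0) := 0 and q(p) := ∂₋ℓ(p) (the left derivative of ℓ at p) for p ∈ (0,1), and let μ be the pushforward of Lebesgue measure on [0,1) under the map p ↦ m · q(p). Then μ ∈ 𝐌, m_μ = m, and L_μ(p) = ℓ(p) for all p ∈ [0,1]. Consequently the map μ ↦ (L_μ, m_μ) is a bijection from 𝐌 onto 𝔏 × (0,∞), where 𝔏 is the set of continuous convex functions [0,1] → [0,1] sending 0 to 0 and 1 to 1. -/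

import Mathlib

open MeasureTheory Filter Topology

noncomputable section

/-- The mean of a measure on `ℝ`. -/
def mMean (μ : Measure ℝ) : ℝ := ∫ x, x ∂μ

/-- `μ ∈ 𝐌`: a Borel probability measure on `ℝ₊` (modelled as a measure on `ℝ` giving no
mass to negative numbers) with finite nonzero mean. -/
def MemM (μ : Measure ℝ) : Prop :=
  IsProbabilityMeasure μ ∧ μ {x | x < 0} = 0 ∧ Integrable id μ ∧ 0 < mMean μ

/-- The cumulative distribution function `F_μ(x) = μ([0,x])`. -/
def cdfR (μ : Measure ℝ) (x : ℝ) : ℝ := (μ (Set.Icc 0 x)).toReal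

/-- The quantile function `Q_μ(p) = inf {x ∈ ℝ₊ : F_μ(x) ≥ p}`. -/
def quant (μ : Measure ℝ) (p : ℝ) : ℝ := sInf {x : ℝ | 0 ≤ x ∧ p ≤ cdfR μ x}

/-- The Lorenz function `L_μ(p) = (∫_0^p Q_μ(t) dt) / m_μ`. -/
def lorenz (μ : Measure ℝ) (p : ℝ) : ℝ := (∫ t in (0:ℝ)..p, quant μ t) / mMean μ

/-- The pseudo-Lorenz function `Λ_μ(p) = (∫_{[0,Q_μ(p)]} u dμ(u)) / m_μ` for `p ∈ [0,1)`,
with `Λ_μ(1) = 1`. -/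
def pseudoLorenz (μ : Measure ℝ) (p : ℝ) : ℝ :=
  if p = 1 then 1 else (∫ u in Set.Icc (0:ℝ) (quant μ p), u ∂μ) / mMean μ

/-- The Gini coefficient `G(μ) = (∫∫ |x-y| d(μ⊗μ)) / (2 m_μ)`. -/
def gini (μ : Measure ℝ) : ℝ := (∫ z : ℝ × ℝ, |z.1 - z.2| ∂(μ.prod μ)) / (2 * mMean μ)

/-- The Hoover coefficient `H(μ) = (∫ |x - m_μ| dμ) / (2 m_μ)`. -/
def hoover (μ : Measure ℝ) : ℝ := (∫ x, |x - mMean μ| ∂μ) / (2 * mMean μ)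

/-- The Wasserstein-1 distance `W₁(μ,ν) = ∫_0^1 |Q_μ - Q_ν|`. -/
def W1 (μ ν : Measure ℝ) : ℝ := ∫ t in (0:ℝ)..1, |quant μ t - quant ν t|

/-- Weak convergence of a sequence of measures: convergence of integrals of all bounded
continuous functions. -/
def WeakCv (μs : ℕ → Measure ℝ) (ν : Measure ℝ) : Prop :=
  ∀ f : ℝ → ℝ, Continuous f → (∃ C : ℝ, ∀ x, |f x| ≤ C) →
    Tendsto (fun n => ∫ x, f x ∂(μs n)) atTop (𝓝 (∫ x, f x ∂ν))

/-- Uniform integrability of a family of measures on `ℝ₊`: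
`sup_i ∫_{(α,∞)} x dμ_i(x) → 0` as `α → +∞`. -/
def UnifInt {ι : Type*} (μs : ι → Measure ℝ) : Prop :=
  ∀ ε > (0:ℝ), ∃ A : ℝ, ∀ α ≥ A, ∀ i, (∫ x in Set.Ioi α, x ∂(μs i)) ≤ ε

end

/-- The left derivative of `ℓ`, set to `0` at `0`. -/
noncomputable def qOf (ℓ : ℝ → ℝ) (p : ℝ) : ℝ :=
  if p = 0 then 0 else derivWithin ℓ (Set.Iio p) p

/-- The pushforward of Lebesgue measure on `[0,1)` by `p ↦ m · ∂₋ℓ(p)`. -/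
noncomputable def muOf (ℓ : ℝ → ℝ) (m : ℝ) : Measure ℝ :=
  Measure.map (fun p => m * qOf ℓ p) (volume.restrict (Set.Ico (0:ℝ) 1))

open Set

set_option linter.unusedSectionVars false

section ConvexPart

variable {ℓ : ℝ → ℝ} (hconv : ConvexOn ℝ (Set.Icc 0 1) ℓ)

lemma mem_S {t : ℝ} (ht : t ∈ Ioo (0:ℝ) 1) : t ∈ Icc (0:ℝ) 1 := ⟨ht.1.le, ht.2.le⟩

include hconv in
lemma hasLeftDeriv {t : ℝ} (ht : t ∈ Ioo (0:ℝ) 1) :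
    HasDerivWithinAt ℓ (qOf ℓ t) (Iio t) t := by
  obtain ⟨ht0, ht1⟩ := ht
  set g : ℝ → ℝ := fun y => slope ℓ t (max y (t/2)) with hg
  have hsm : MonotoneOn (slope ℓ t) (Icc (0:ℝ) 1 \ {t}) :=
    hconv.slope_mono ⟨ht0.le, ht1.le⟩
  have hmem : ∀ y : ℝ, y < t → max y (t/2) ∈ Icc (0:ℝ) 1 \ {t} := by
    intro y hy
    have h1 : (0:ℝ) < t/2 := by linarith
    have h2 : max y (t/2) < t := max_lt hy (by linarith)
    exact ⟨⟨le_trans h1.le (le_max_right _ _), by linarith⟩, by simp [h2.ne]⟩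
  have hmono : MonotoneOn g (Iio t) := by
    intro a (ha : a < t) b (hb : b < t) hab
    exact hsm (hmem a ha) (hmem b hb) (max_le_max hab le_rfl)
  have hbdd : BddAbove (g '' Iio t) := by
    refine ⟨slope ℓ t 1, ?_⟩
    rintro _ ⟨y, (hy : y < t), rfl⟩
    refine hsm (hmem y hy) ⟨⟨zero_le_one, le_rfl⟩, by simp [ht1.ne']⟩ ?_
    exact ((max_lt hy (by linarith)).le).trans ht1.le
  have htend : Tendsto g (𝓝[<] t) (𝓝 (sSup (g '' Iio t))) :=
    hmono.tendsto_nhdsLT hbdd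
  have heq : g =ᶠ[𝓝[<] t] slope ℓ t := by
    filter_upwards [Ioo_mem_nhdsLT (by linarith : t/2 < t)] with y hy
    simp [hg, max_eq_left hy.1.le]
  have htend' : Tendsto (slope ℓ t) (𝓝[<] t) (𝓝 (sSup (g '' Iio t))) :=
    htend.congr' heq
  have hD : HasDerivWithinAt ℓ (sSup (g '' Iio t)) (Iio t) t :=
    (hasDerivWithinAt_iff_tendsto_slope' (notMem_Iio_self)).mpr htend'
  have : qOf ℓ t = sSup (g '' Iio t) := by
    rw [qOf, if_neg ht0.ne', hD.derivWithin (uniqueDiffWithinAt_Iio t)]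
  rw [this]; exact hD

include hconv in
lemma hasRightDeriv {t : ℝ} (ht : t ∈ Ioo (0:ℝ) 1) :
    HasDerivWithinAt ℓ (derivWithin ℓ (Ioi t) t) (Ioi t) t := by
  obtain ⟨ht0, ht1⟩ := ht
  set g : ℝ → ℝ := fun y => slope ℓ t (min y ((t+1)/2)) with hg
  have hsm : MonotoneOn (slope ℓ t) (Icc (0:ℝ) 1 \ {t}) :=
    hconv.slope_mono ⟨ht0.le, ht1.le⟩
  have hmem : ∀ y : ℝ, t < y → min y ((t+1)/2) ∈ Icc (0:ℝ) 1 \ {t} := by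
    intro y hy
    have h2 : t < min y ((t+1)/2) := lt_min hy (by linarith)
    exact ⟨⟨by linarith, min_le_of_right_le (by linarith)⟩, by simp [h2.ne']⟩
  have hmono : MonotoneOn g (Ioi t) := by
    intro a (ha : t < a) b (hb : t < b) hab
    exact hsm (hmem a ha) (hmem b hb) (min_le_min hab le_rfl)
  have hbdd : BddBelow (g '' Ioi t) := by
    refine ⟨slope ℓ t 0, ?_⟩
    rintro _ ⟨y, (hy : t < y), rfl⟩
    refine hsm ⟨⟨le_rfl, zero_le_one⟩, by simp [ht0.ne]⟩ (hmem y hy) ?_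
    exact le_trans ht0.le (lt_min hy (by linarith)).le
  have htend : Tendsto g (𝓝[>] t) (𝓝 (sInf (g '' Ioi t))) :=
    hmono.tendsto_nhdsGT hbdd
  have heq : g =ᶠ[𝓝[>] t] slope ℓ t := by
    filter_upwards [Ioo_mem_nhdsGT (by linarith : t < (t+1)/2)] with y hy
    simp [hg, min_eq_left hy.2.le]
  have htend' : Tendsto (slope ℓ t) (𝓝[>] t) (𝓝 (sInf (g '' Ioi t))) :=
    htend.congr' heq
  have hD : HasDerivWithinAt ℓ (sInf (g '' Ioi t)) (Ioi t) t :=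
    (hasDerivWithinAt_iff_tendsto_slope' (notMem_Ioi_self)).mpr htend'
  have : derivWithin ℓ (Ioi t) t = sInf (g '' Ioi t) :=
    hD.derivWithin (uniqueDiffWithinAt_Ioi t)
  rw [this]; exact hD

include hconv in
/-- slope to the left is ≤ left derivative -/
lemma slope_le_qOf {x t : ℝ} (hx : x ∈ Icc (0:ℝ) 1) (ht : t ∈ Ioo (0:ℝ) 1) (hxt : x < t) :
    slope ℓ x t ≤ qOf ℓ t :=
  hconv.slope_le_of_hasDerivWithinAt_Iio hx (mem_S ht) hxt (hasLeftDeriv hconv ht)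

include hconv in
/-- left derivative is ≤ slope to the right -/
lemma qOf_le_slope {t y : ℝ} (ht : t ∈ Ioo (0:ℝ) 1) (hy : y ∈ Icc (0:ℝ) 1) (hty : t < y) :
    qOf ℓ t ≤ slope ℓ t y := by
  have hD := hasLeftDeriv hconv ht
  have htend := (hasDerivWithinAt_iff_tendsto_slope' (notMem_Iio_self)).mp hD
  refine le_of_tendsto htend ?_
  filter_upwards [Ioo_mem_nhdsLT (by linarith [ht.1] : t/2 < t)] with z hz
  have hz' : z ∈ Icc (0:ℝ) 1 \ {t} :=
    ⟨⟨by linarith [ht.1, hz.1], by linarith [ht.2, hz.2]⟩, by simp [hz.2.ne]⟩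
  have hy' : y ∈ Icc (0:ℝ) 1 \ {t} := ⟨hy, by simp [hty.ne']⟩
  exact hconv.slope_mono (mem_S ht) hz' hy' (by linarith [hz.2])

include hconv in
lemma qOf_nonneg (h0 : ℓ 0 = 0) (hnn : ∀ x ∈ Icc (0:ℝ) 1, 0 ≤ ℓ x)
    {t : ℝ} (ht : t ∈ Ico (0:ℝ) 1) : 0 ≤ qOf ℓ t := by
  rcases eq_or_lt_of_le ht.1 with rfl | ht0
  · simp [qOf]
  · have hslope : (0:ℝ) ≤ slope ℓ 0 t := by
      rw [slope_def_field, div_nonneg_iff]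
      exact Or.inl ⟨by simp [h0, hnn t ⟨ht0.le, ht.2.le⟩], by simpa using ht0.le⟩
    exact le_trans hslope (slope_le_qOf hconv ⟨le_rfl, zero_le_one⟩ ⟨ht0, ht.2⟩ ht0)

include hconv in
lemma qOf_mono (h0 : ℓ 0 = 0) (hnn : ∀ x ∈ Icc (0:ℝ) 1, 0 ≤ ℓ x) :
    MonotoneOn (qOf ℓ) (Ico (0:ℝ) 1) := by
  intro s hs t ht hst
  rcases eq_or_lt_of_le hst with rfl | hst'
  · exact le_rfl
  rcases eq_or_lt_of_le hs.1 with rfl | hs0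
  · simpa [qOf] using qOf_nonneg hconv h0 hnn ht
  · calc qOf ℓ s ≤ slope ℓ s t := qOf_le_slope hconv ⟨hs0, hs.2⟩ ⟨(hs0.trans hst').le, ht.2.le⟩ hst'
      _ ≤ qOf ℓ t :=
          slope_le_qOf hconv ⟨hs.1, hs.2.le⟩ ⟨hs0.trans hst', ht.2⟩ hst'

end ConvexPart

section More
variable {ℓ : ℝ → ℝ} (hconv : ConvexOn ℝ (Set.Icc 0 1) ℓ)
  (hcont : ContinuousOn ℓ (Set.Icc 0 1))

include hconv hcont in
lemma slope_le_of_forall_slope_le {z t c : ℝ} (hz : z ∈ Ioo (0:ℝ) t) (ht : t ∈ Ioo (0:ℝ) 1)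
    (hc : ∀ w ∈ Ioo z t, slope ℓ z w ≤ c) : slope ℓ z t ≤ c := by
  have hct : ContinuousAt ℓ t := hcont.continuousAt (Icc_mem_nhds ht.1 ht.2)
  have hne : (t - z) ≠ 0 := by have := hz.2; intro h; linarith [sub_eq_zero.mp h]
  have htd : Tendsto (fun w => slope ℓ z w) (𝓝[Ioo z t] t) (𝓝 (slope ℓ z t)) := by
    simp only [slope_def_field]
    refine Tendsto.mono_left ?_ nhdsWithin_le_nhds
    exact ((hct.sub continuousAt_const).div
      ((continuousAt_id.sub continuousAt_const)) hne)
  have : (𝓝[Ioo z t] t).NeBot := by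
    rw [nhdsWithin_Ioo_eq_nhdsLT hz.2]; infer_instance
  refine le_of_tendsto htd ?_
  filter_upwards [self_mem_nhdsWithin] with w hw using hc w hw

include hconv hcont in
lemma qOf_left_cont {t c : ℝ} (ht : t ∈ Ioo (0:ℝ) 1) (hc : ∀ s ∈ Ioo 0 t, qOf ℓ s ≤ c) :
    qOf ℓ t ≤ c := by
  have htend := (hasDerivWithinAt_iff_tendsto_slope' notMem_Iio_self).mp
    (hasLeftDeriv hconv ht)
  refine le_of_tendsto htend ?_
  filter_upwards [Ioo_mem_nhdsLT ht.1] with z hz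
  rw [slope_comm]
  refine slope_le_of_forall_slope_le hconv hcont hz ht (fun w hw => ?_)
  have hw1 : w ∈ Ioo (0:ℝ) 1 := ⟨hz.1.trans hw.1, hw.2.trans ht.2⟩
  exact le_trans
    (slope_le_qOf hconv ⟨hz.1.le, (hz.2.trans ht.2).le⟩ hw1 hw.1)
    (hc w ⟨hw1.1, hw.2⟩)

include hconv in
lemma qOf_le_rOf {t : ℝ} (ht : t ∈ Ioo (0:ℝ) 1) :
    qOf ℓ t ≤ derivWithin ℓ (Ioi t) t := by
  have htend := (hasDerivWithinAt_iff_tendsto_slope' notMem_Ioi_self).mp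
    (hasRightDeriv hconv ht)
  refine ge_of_tendsto htend ?_
  filter_upwards [Ioo_mem_nhdsGT ht.2] with w hw
  exact qOf_le_slope hconv ht ⟨(ht.1.trans hw.1).le, hw.2.le⟩ hw.1

include hconv in
lemma rOf_le_qOf {t u : ℝ} (ht : t ∈ Ioo (0:ℝ) 1) (hu : u ∈ Ioo (0:ℝ) 1) (htu : t < u) :
    derivWithin ℓ (Ioi t) t ≤ qOf ℓ u :=
  le_trans
    (hconv.le_slope_of_hasDerivWithinAt_Ioi (mem_S ht) (mem_S hu) htu (hasRightDeriv hconv ht))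
    (slope_le_qOf hconv (mem_S ht) hu htu)

include hconv in
lemma rOf_mono : MonotoneOn (fun t => derivWithin ℓ (Ioi t) t) (Ioo (0:ℝ) 1) := by
  intro s hs t ht hst
  rcases eq_or_lt_of_le hst with rfl | h
  · exact le_rfl
  · exact le_trans (rOf_le_qOf hconv hs ht h) (qOf_le_rOf hconv ht)

include hconv hcont in
lemma ftcQ (h0 : ℓ 0 = 0) (hnn : ∀ x ∈ Icc (0:ℝ) 1, 0 ≤ ℓ x)
    {a b : ℝ} (ha : 0 < a) (hab : a ≤ b) (hb : b < 1) :
    ∫ x in a..b, qOf ℓ x = ℓ b - ℓ a := by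
  have hsub : Icc a b ⊆ Ico (0:ℝ) 1 := fun x hx => ⟨ha.le.trans hx.1, lt_of_le_of_lt hx.2 hb⟩
  have hsub' : Icc a b ⊆ Ioo (0:ℝ) 1 := fun x hx => ⟨ha.trans_le hx.1, lt_of_le_of_lt hx.2 hb⟩
  have hC : ContinuousOn ℓ (Icc a b) := hcont.mono (Icc_subset_Icc ha.le hb.le)
  have hderiv : ∀ x ∈ Ioo a b, HasDerivWithinAt ℓ (derivWithin ℓ (Ioi x) x) (Ioi x) x :=
    fun x hx => hasRightDeriv hconv (hsub' ⟨hx.1.le, hx.2.le⟩)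
  have hintR : IntervalIntegrable (fun x => derivWithin ℓ (Ioi x) x) volume a b := by
    apply MonotoneOn.intervalIntegrable
    rw [uIcc_of_le hab]
    exact (rOf_mono hconv).mono hsub'
  have hFTC := intervalIntegral.integral_eq_sub_of_hasDeriv_right_of_le hab hC hderiv hintR
  rw [← hFTC]
  apply intervalIntegral.integral_congr_ae
  set Qc : ℝ → ℝ := fun x => qOf ℓ (max a (min x b)) with hQc
  have hclamp : ∀ x : ℝ, max a (min x b) ∈ Icc a b :=
    fun x => ⟨le_max_left _ _, max_le hab (min_le_right _ _)⟩
  have hQmono : Monotone Qc := by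
    intro x y hxy
    exact qOf_mono hconv h0 hnn (hsub (hclamp x)) (hsub (hclamp y))
      (max_le_max le_rfl (min_le_min hxy le_rfl))
  have hD : Set.Countable {x | ¬ContinuousAt Qc x} := hQmono.countable_not_continuousAt
  filter_upwards [hD.ae_notMem volume, (Set.countable_singleton b).ae_notMem volume]
    with x hx hxb hxI
  rw [Set.uIoc_of_le hab] at hxI
  have hxI' : x ∈ Ioo a b := ⟨hxI.1, lt_of_le_of_ne hxI.2 (by simpa using hxb)⟩
  have hx01 : x ∈ Ioo (0:ℝ) 1 := hsub' ⟨hxI'.1.le, hxI'.2.le⟩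
  have hxc : ContinuousAt Qc x := not_not.mp hx
  refine le_antisymm (qOf_le_rOf hconv hx01) ?_
  have hQcx : Qc x = qOf ℓ x := by
    rw [hQc]; simp only []
    rw [min_eq_left hxI'.2.le, max_eq_right hxI'.1.le]
  have htd : Tendsto Qc (𝓝[Ioo x b] x) (𝓝 (qOf ℓ x)) := by
    rw [← hQcx]
    exact hxc.continuousWithinAt.tendsto
  have : (𝓝[Ioo x b] x).NeBot := by
    rw [nhdsWithin_Ioo_eq_nhdsGT hxI'.2]; infer_instance
  refine ge_of_tendsto htd ?_
  filter_upwards [self_mem_nhdsWithin] with y hy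
  have hy01 : y ∈ Ioo (0:ℝ) 1 := hsub' ⟨(hxI'.1.trans hy.1).le, hy.2.le⟩
  have hQcy : Qc y = qOf ℓ y := by
    rw [hQc]; simp only []
    rw [min_eq_left hy.2.le, max_eq_right (hxI'.1.trans hy.1).le]
  rw [hQcy]
  exact rOf_le_qOf hconv hx01 hy01 hy.1
end More

section Integrals
variable {ℓ : ℝ → ℝ} (hconv : ConvexOn ℝ (Set.Icc 0 1) ℓ)
  (hcont : ContinuousOn ℓ (Set.Icc 0 1)) (h0 : ℓ 0 = 0)
  (hnn : ∀ x ∈ Icc (0:ℝ) 1, 0 ≤ ℓ x)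

include hconv h0 hnn in
lemma ellMono : MonotoneOn ℓ (Icc (0:ℝ) 1) := by
  intro x hx y hy hxy
  rcases eq_or_lt_of_le hxy with rfl | hxy'
  · exact le_rfl
  rcases eq_or_lt_of_le hx.1 with rfl | hx0
  · rw [h0]; exact hnn y hy
  · have hs := hconv.slope_mono_adjacent (⟨le_rfl, zero_le_one⟩ : (0:ℝ) ∈ Icc (0:ℝ) 1)
      hy hx0 hxy'
    have h1 : (0:ℝ) ≤ (ℓ x - ℓ 0) / (x - 0) :=
      div_nonneg (by simp [h0, hnn x hx]) (by linarith)
    have h2 : (0:ℝ) ≤ (ℓ y - ℓ x) / (y - x) := le_trans h1 hs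
    rw [div_nonneg_iff] at h2
    rcases h2 with ⟨h2, _⟩ | ⟨_, h2⟩
    · linarith
    · linarith [sub_pos.mpr hxy']

include hconv hcont h0 hnn in
lemma lint_q_Ioo {p : ℝ} (hp : p ∈ Ioc (0:ℝ) 1) :
    ∫⁻ t in Ioo 0 p, ENNReal.ofReal (qOf ℓ t) = ENNReal.ofReal (ℓ p) := by
  obtain ⟨hp0, hp1⟩ := hp
  set f : ℝ → ENNReal := fun t => ENNReal.ofReal (qOf ℓ t) with hf
  set ν : Measure ℝ := volume.withDensity f with hν
  have hν_apply : ∀ s : Set ℝ, MeasurableSet s → ν s = ∫⁻ t in s, f t :=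
    fun s hs => withDensity_apply f hs
  set u : ℕ → ℝ := fun n => p / (↑n + 3) with hu
  have hu_pos : ∀ n, 0 < u n := fun n => div_pos hp0 (by positivity)
  have hdiv : ∀ {a b : ℝ}, 0 < a → a ≤ b → p / b ≤ p / a := by
    intro a b ha hab
    exact div_le_div_of_nonneg_left hp0.le ha hab
  have hu_le : ∀ n, u n ≤ p / 3 := by
    intro n
    show p / (↑n + 3) ≤ p / 3
    exact hdiv (by norm_num) (by linarith [Nat.cast_nonneg (α := ℝ) n])
  have huv : ∀ n, u n ≤ p - u n := by
    intro n
    have := hu_le n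
    linarith
  have hvlt : ∀ n, p - u n < 1 := fun n => by linarith [hu_pos n]
  have hsubIco : ∀ n, Icc (u n) (p - u n) ⊆ Ico (0:ℝ) 1 := by
    intro n x hx
    exact ⟨le_trans (hu_pos n).le hx.1, lt_of_le_of_lt hx.2 (hvlt n)⟩
  set A : ℕ → Set ℝ := fun n => Icc (u n) (p - u n) with hA_def
  have hu_anti : ∀ ⦃n k : ℕ⦄, n ≤ k → u k ≤ u n := by
    intro n k hnk
    show p / (↑k + 3) ≤ p / (↑n + 3)
    have : (n:ℝ) ≤ (k:ℝ) := by exact_mod_cast hnk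
    exact hdiv (by positivity) (by linarith)
  have hAmono : Monotone A := by
    intro n k hnk
    exact Icc_subset_Icc (hu_anti hnk) (by linarith [hu_anti hnk])
  have hAUnion : ⋃ n, A n = Ioo 0 p := by
    apply subset_antisymm
    · refine iUnion_subset fun n x hx => ⟨lt_of_lt_of_le (hu_pos n) hx.1, ?_⟩
      exact lt_of_le_of_lt hx.2 (by linarith [hu_pos n])
    · intro x hx
      set ε : ℝ := min x (p - x) with hε
      have hε0 : 0 < ε := lt_min hx.1 (by linarith [hx.2])
      obtain ⟨n, hn⟩ := exists_nat_ge (p / ε)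
      have hne : u n ≤ ε := by
        show p / (↑n + 3) ≤ ε
        rw [div_le_iff₀ (by positivity : (0:ℝ) < ↑n + 3)]
        have h2 : p ≤ ↑n * ε := (div_le_iff₀ hε0).mp hn
        nlinarith [hε0.le]
      refine mem_iUnion.mpr ⟨n, ?_, ?_⟩
      · exact le_trans hne (min_le_left _ _)
      · have : u n ≤ p - x := le_trans hne (min_le_right _ _)
        linarith
  have hA_meas : ∀ n, ν (A n) = ENNReal.ofReal (ℓ (p - u n) - ℓ (u n)) := by
    intro n
    rw [hν_apply _ measurableSet_Icc]
    have hint : IntegrableOn (qOf ℓ) (Icc (u n) (p - u n)) volume :=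
      MonotoneOn.integrableOn_isCompact isCompact_Icc
        ((qOf_mono hconv h0 hnn).mono (hsubIco n))
    have hae : 0 ≤ᵐ[volume.restrict (Icc (u n) (p - u n))] qOf ℓ :=
      (ae_restrict_iff' measurableSet_Icc).mpr
        (ae_of_all _ fun x hx => qOf_nonneg hconv h0 hnn (hsubIco n hx))
    rw [← ofReal_integral_eq_lintegral_ofReal hint hae]
    congr 1
    rw [integral_Icc_eq_integral_Ioc, ← intervalIntegral.integral_of_le (huv n)]
    exact ftcQ hconv hcont h0 hnn (hu_pos n) (huv n) (hvlt n)
  have hmono2 : Monotone fun n => ν (A n) := fun n k h => measure_mono (hAmono h)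
  have hsup : ν (Ioo 0 p) = ⨆ n, ν (A n) := by
    rw [← hAUnion]
    exact hAmono.directed_le.measure_iUnion
  have hulim : Tendsto u atTop (𝓝 0) :=
    tendsto_const_nhds.div_atTop
      (tendsto_atTop_add_const_right _ 3 tendsto_natCast_atTop_atTop)
  have huIcc : ∀ n, u n ∈ Icc (0:ℝ) 1 :=
    fun n => ⟨(hu_pos n).le, le_trans (hu_le n) (by linarith)⟩
  have hvIcc : ∀ n, p - u n ∈ Icc (0:ℝ) 1 :=
    fun n => ⟨le_trans (hu_pos n).le (huv n), by linarith [hu_pos n]⟩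
  have hl0 : Tendsto (fun n => ℓ (u n)) atTop (𝓝 (ℓ 0)) := by
    refine ((hcont 0 ⟨le_rfl, zero_le_one⟩).tendsto).comp ?_
    rw [tendsto_nhdsWithin_iff]
    exact ⟨hulim, Eventually.of_forall huIcc⟩
  have hlp : Tendsto (fun n => ℓ (p - u n)) atTop (𝓝 (ℓ p)) := by
    refine ((hcont p ⟨hp0.le, hp1⟩).tendsto).comp ?_
    rw [tendsto_nhdsWithin_iff]
    constructor
    · have := tendsto_const_nhds (x := p) (f := atTop (α := ℕ)) |>.sub hulim
      simpa using this
    · exact Eventually.of_forall hvIcc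
  have htendAll : Tendsto (fun n => ν (A n)) atTop (𝓝 (ENNReal.ofReal (ℓ p - ℓ 0))) := by
    simp_rw [hA_meas]
    exact (ENNReal.continuous_ofReal.tendsto _).comp (hlp.sub hl0)
  have : ν (Ioo 0 p) = ENNReal.ofReal (ℓ p - ℓ 0) := by
    rw [hsup]
    exact tendsto_nhds_unique (tendsto_atTop_iSup hmono2) htendAll
  rw [← hν_apply _ measurableSet_Ioo, this, h0, sub_zero]

include hconv h0 hnn in
lemma q_aemeas {s : Set ℝ} (hs : MeasurableSet s) (hsub : s ⊆ Ico (0:ℝ) 1) :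
    AEMeasurable (qOf ℓ) (volume.restrict s) :=
  aemeasurable_restrict_of_monotoneOn hs ((qOf_mono hconv h0 hnn).mono hsub)

include hconv hcont h0 hnn in
lemma integrableOn_q {p : ℝ} (hp : p ∈ Ioc (0:ℝ) 1) :
    IntegrableOn (qOf ℓ) (Ioo (0:ℝ) p) volume := by
  have hsub : Ioo (0:ℝ) p ⊆ Ico 0 1 := fun x hx => ⟨hx.1.le, lt_of_lt_of_le hx.2 hp.2⟩
  have hae : 0 ≤ᵐ[volume.restrict (Ioo (0:ℝ) p)] qOf ℓ :=
    (ae_restrict_iff' measurableSet_Ioo).mpr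
      (ae_of_all _ fun x hx => qOf_nonneg hconv h0 hnn (hsub hx))
  refine ⟨(q_aemeas hconv h0 hnn measurableSet_Ioo hsub).aestronglyMeasurable, ?_⟩
  rw [hasFiniteIntegral_iff_ofReal hae, lint_q_Ioo hconv hcont h0 hnn hp]
  exact ENNReal.ofReal_lt_top

include hconv hcont h0 hnn in
lemma setIntegral_q {p : ℝ} (hp : p ∈ Ioc (0:ℝ) 1) :
    ∫ t in Ioo (0:ℝ) p, qOf ℓ t = ℓ p := by
  have hsub : Ioo (0:ℝ) p ⊆ Ico 0 1 := fun x hx => ⟨hx.1.le, lt_of_lt_of_le hx.2 hp.2⟩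
  have hae : 0 ≤ᵐ[volume.restrict (Ioo (0:ℝ) p)] qOf ℓ :=
    (ae_restrict_iff' measurableSet_Ioo).mpr
      (ae_of_all _ fun x hx => qOf_nonneg hconv h0 hnn (hsub hx))
  rw [integral_eq_lintegral_of_nonneg_ae hae
    (q_aemeas hconv h0 hnn measurableSet_Ioo hsub).aestronglyMeasurable,
    lint_q_Ioo hconv hcont h0 hnn hp,
    ENNReal.toReal_ofReal (hnn p ⟨hp.1.le, hp.2⟩)]

include hconv hcont h0 hnn in
lemma intervalIntegral_q {p : ℝ} (hp : p ∈ Ioc (0:ℝ) 1) :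
    ∫ t in (0:ℝ)..p, qOf ℓ t = ℓ p := by
  rw [intervalIntegral.integral_of_le hp.1.le, integral_Ioc_eq_integral_Ioo]
  exact setIntegral_q hconv hcont h0 hnn hp

end Integrals

section Forward
variable {ℓ : ℝ → ℝ} {m : ℝ}
  (hconv : ConvexOn ℝ (Set.Icc 0 1) ℓ)
  (hcont : ContinuousOn ℓ (Set.Icc 0 1))
  (h0 : ℓ 0 = 0) (h1 : ℓ 1 = 1)
  (hnn : ∀ x ∈ Icc (0:ℝ) 1, 0 ≤ ℓ x) (hm : 0 < m)

lemma restrict_Ico_eq : volume.restrict (Set.Ico (0:ℝ) 1) = volume.restrict (Set.Ioo 0 1) :=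
  (Measure.restrict_congr_set Ioo_ae_eq_Ico).symm

include hconv h0 hnn in
lemma hT_aemeas : AEMeasurable (fun p => m * qOf ℓ p) (volume.restrict (Set.Ico (0:ℝ) 1)) :=
  (q_aemeas hconv h0 hnn measurableSet_Ico subset_rfl).const_mul m

include hconv h0 hnn in
lemma muOf_apply {s : Set ℝ} (hs : MeasurableSet s) :
    muOf ℓ m s = volume ((fun p => m * qOf ℓ p) ⁻¹' s ∩ Set.Ico 0 1) := by
  rw [muOf, Measure.map_apply_of_aemeasurable (hT_aemeas hconv h0 hnn) hs,
    Measure.restrict_apply' measurableSet_Ico]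

include hconv h0 hnn in
lemma muOf_prob : IsProbabilityMeasure (muOf ℓ m) := by
  constructor
  rw [muOf_apply hconv h0 hnn MeasurableSet.univ]
  simp [Real.volume_Ico]

include hconv h0 hnn hm in
lemma muOf_neg : muOf ℓ m {x | x < 0} = 0 := by
  have : ({x : ℝ | x < 0}) = Iio 0 := rfl
  rw [this, muOf_apply hconv h0 hnn measurableSet_Iio]
  convert measure_empty (μ := (volume : Measure ℝ))
  rw [eq_empty_iff_forall_notMem]
  rintro p ⟨(hp : m * qOf ℓ p < 0), hp2⟩
  exact absurd hp (not_lt.mpr (mul_nonneg hm.le (qOf_nonneg hconv h0 hnn hp2)))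

include hconv hcont h0 hnn in
lemma integrable_T : Integrable (fun p => m * qOf ℓ p) (volume.restrict (Set.Ico (0:ℝ) 1)) := by
  rw [restrict_Ico_eq]
  exact (integrableOn_q hconv hcont h0 hnn ⟨zero_lt_one, le_rfl⟩).const_mul m

include hconv hcont h0 h1 hnn in
lemma muOf_integrable_id : Integrable id (muOf ℓ m) := by
  rw [muOf, integrable_map_measure aestronglyMeasurable_id (hT_aemeas hconv h0 hnn)]
  exact integrable_T hconv hcont h0 hnn

include hconv hcont h0 h1 hnn in
lemma muOf_mean : mMean (muOf ℓ m) = m := by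
  have hmap := integral_map (μ := volume.restrict (Set.Ico (0:ℝ) 1))
    (hT_aemeas (m := m) hconv h0 hnn) (f := fun x : ℝ => x)
    (by exact aestronglyMeasurable_id)
  rw [mMean, muOf, hmap]
  have : ∫ p in Set.Ico (0:ℝ) 1, m * qOf ℓ p = ∫ p in Set.Ioo (0:ℝ) 1, m * qOf ℓ p := by
    rw [restrict_Ico_eq]
  rw [this, MeasureTheory.integral_const_mul,
    setIntegral_q hconv hcont h0 hnn ⟨zero_lt_one, le_rfl⟩, h1, mul_one]

end Forward

section Forward2
variable {ℓ : ℝ → ℝ} {m : ℝ}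
  (hconv : ConvexOn ℝ (Set.Icc 0 1) ℓ)
  (hcont : ContinuousOn ℓ (Set.Icc 0 1))
  (h0 : ℓ 0 = 0) (h1 : ℓ 1 = 1)
  (hnn : ∀ x ∈ Icc (0:ℝ) 1, 0 ≤ ℓ x) (hm : 0 < m)

include hconv hcont h0 hnn hm in
lemma quant_muOf {t : ℝ} (ht : t ∈ Ioo (0:ℝ) 1) :
    quant (muOf ℓ m) t = m * qOf ℓ t := by
  set μ := muOf ℓ m with hμ
  have happly : ∀ x : ℝ, μ (Icc 0 x) = volume ({p : ℝ | m * qOf ℓ p ∈ Icc 0 x} ∩ Ico 0 1) :=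
    fun x => muOf_apply hconv h0 hnn measurableSet_Icc
  have hub : ∀ x : ℝ, μ (Icc 0 x) ≠ ⊤ := by
    intro x
    rw [happly]
    refine (lt_of_le_of_lt (measure_mono inter_subset_right) ?_).ne
    simp [Real.volume_Ico]
  have hmem : m * qOf ℓ t ∈ {x : ℝ | 0 ≤ x ∧ t ≤ cdfR μ x} := by
    refine ⟨mul_nonneg hm.le (qOf_nonneg hconv h0 hnn ⟨ht.1.le, ht.2⟩), ?_⟩
    have hsub : Ioo 0 t ⊆ {p : ℝ | m * qOf ℓ p ∈ Icc 0 (m * qOf ℓ t)} ∩ Ico 0 1 := by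
      rintro p hp
      have hpI : p ∈ Ico (0:ℝ) 1 := ⟨hp.1.le, hp.2.trans ht.2⟩
      refine ⟨⟨mul_nonneg hm.le (qOf_nonneg hconv h0 hnn hpI), ?_⟩, hpI⟩
      exact mul_le_mul_of_nonneg_left
        (qOf_mono hconv h0 hnn hpI ⟨ht.1.le, ht.2⟩ hp.2.le) hm.le
    have hvol : ENNReal.ofReal t ≤ μ (Icc 0 (m * qOf ℓ t)) := by
      rw [happly]
      calc ENNReal.ofReal t = volume (Ioo (0:ℝ) t) := by simp [Real.volume_Ioo]
        _ ≤ _ := measure_mono hsub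
    calc t = (ENNReal.ofReal t).toReal := (ENNReal.toReal_ofReal ht.1.le).symm
      _ ≤ (μ (Icc 0 (m * qOf ℓ t))).toReal := ENNReal.toReal_mono (hub _) hvol
  apply le_antisymm
  · exact csInf_le ⟨0, fun x hx => hx.1⟩ hmem
  · refine le_csInf ⟨_, hmem⟩ ?_
    rintro x ⟨hx0, hxF⟩
    by_contra hcon
    push_neg at hcon
    have hxm : x / m < qOf ℓ t := by rw [div_lt_iff₀ hm]; linarith [mul_comm m (qOf ℓ t)]
    have hnot : ¬ ∀ s ∈ Ioo (0:ℝ) t, qOf ℓ s ≤ x / m :=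
      fun h => absurd (qOf_left_cont hconv hcont ht h) (not_le.mpr hxm)
    push_neg at hnot
    obtain ⟨s, hs, hqs⟩ := hnot
    have hsub2 : {p : ℝ | m * qOf ℓ p ∈ Icc 0 x} ∩ Ico 0 1 ⊆ Ico 0 s := by
      rintro p ⟨hp1, hp2⟩
      refine ⟨hp2.1, ?_⟩
      by_contra hps
      push_neg at hps
      have hqq : qOf ℓ s ≤ qOf ℓ p :=
        qOf_mono hconv h0 hnn ⟨hs.1.le, hs.2.trans ht.2⟩ hp2 hps
      have hlt : x < m * qOf ℓ p := by
        have h2 := lt_of_lt_of_le hqs hqq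
        rw [div_lt_iff₀ hm] at h2
        linarith [mul_comm (qOf ℓ p) m]
      exact absurd hp1.2 (not_le.mpr hlt)
    have hle : μ (Icc 0 x) ≤ ENNReal.ofReal s := by
      rw [happly]
      calc volume _ ≤ volume (Ico (0:ℝ) s) := measure_mono hsub2
        _ = ENNReal.ofReal s := by simp [Real.volume_Ico]
    have hcs : cdfR μ x ≤ s := by
      rw [cdfR]
      calc (μ (Icc 0 x)).toReal ≤ (ENNReal.ofReal s).toReal :=
            ENNReal.toReal_mono (by simp) hle
        _ = s := ENNReal.toReal_ofReal hs.1.le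
    have := hxF.trans hcs
    linarith [hs.2]

include hconv hcont h0 h1 hnn hm in
lemma lorenz_muOf {p : ℝ} (hp : p ∈ Icc (0:ℝ) 1) : lorenz (muOf ℓ m) p = ℓ p := by
  rcases eq_or_lt_of_le hp.1 with rfl | hp0
  · rw [lorenz, intervalIntegral.integral_same, zero_div, h0]
  · have hmean := muOf_mean (ℓ := ℓ) (m := m) hconv hcont h0 h1 hnn
    rw [lorenz, hmean]
    have hIeq : ∫ t in (0:ℝ)..p, quant (muOf ℓ m) t = ∫ t in (0:ℝ)..p, m * qOf ℓ t := by
      apply intervalIntegral.integral_congr_ae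
      filter_upwards [(Set.countable_singleton p).ae_notMem volume] with t htp htI
      rw [Set.uIoc_of_le hp0.le] at htI
      have htOo : t ∈ Ioo (0:ℝ) 1 :=
        ⟨htI.1, lt_of_lt_of_le (lt_of_le_of_ne htI.2 (by simpa using htp)) hp.2⟩
      exact quant_muOf hconv hcont h0 hnn hm htOo
    rw [hIeq, intervalIntegral.integral_const_mul,
      intervalIntegral_q hconv hcont h0 hnn ⟨hp0, hp.2⟩, mul_comm, mul_div_assoc,
      div_self hm.ne', mul_one]

end Forward2

section Inverse
variable {μ : Measure ℝ} (hprob : IsProbabilityMeasure μ)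
  (hneg : μ {x : ℝ | x < 0} = 0) (hint : Integrable id μ)

include hprob in
lemma cdfR_nonneg (x : ℝ) : 0 ≤ cdfR μ x := ENNReal.toReal_nonneg

include hprob in
lemma cdfR_le_one (x : ℝ) : cdfR μ x ≤ 1 := by
  rw [cdfR]
  calc (μ (Icc 0 x)).toReal ≤ (μ univ).toReal :=
        ENNReal.toReal_mono (measure_ne_top μ _) (measure_mono (subset_univ _))
    _ = 1 := by simp

include hprob in
lemma cdfR_mono : Monotone (cdfR μ) := fun x y hxy =>
  ENNReal.toReal_mono (measure_ne_top μ _) (measure_mono (Icc_subset_Icc_right hxy))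

include hprob hneg in
lemma mu_Iic_eq {x : ℝ} (hx : 0 ≤ x) : μ (Iic x) = μ (Icc 0 x) := by
  apply le_antisymm
  · have hsub : Iic x ⊆ {y : ℝ | y < 0} ∪ Icc 0 x := by
      intro y hy
      rcases lt_or_ge y 0 with h | h
      · exact Or.inl h
      · exact Or.inr ⟨h, hy⟩
    calc μ (Iic x) ≤ μ ({y : ℝ | y < 0} ∪ Icc 0 x) := measure_mono hsub
      _ ≤ μ {y : ℝ | y < 0} + μ (Icc 0 x) := measure_union_le _ _
      _ = μ (Icc 0 x) := by rw [hneg, zero_add]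
  · exact measure_mono fun y hy => hy.2

include hprob hneg in
lemma mu_Ici_zero : μ (Ici (0:ℝ)) = 1 := by
  have : ({y : ℝ | y < 0}) = Iio 0 := rfl
  rw [this] at hneg
  have := measure_compl (measurableSet_Iio (a := (0:ℝ))) (measure_ne_top μ _)
  rw [hneg, compl_Iio, tsub_zero] at this
  rw [this, measure_univ]

include hprob hneg in
lemma exists_cdfR_ge {t : ℝ} (ht : t < 1) : ∃ x : ℝ, 0 ≤ x ∧ t ≤ cdfR μ x := by
  have hmono : Monotone (fun n : ℕ => Icc (0:ℝ) n) :=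
    fun n k h => Icc_subset_Icc_right (by exact_mod_cast h)
  have hun : ⋃ n : ℕ, Icc (0:ℝ) n = Ici 0 := by
    apply subset_antisymm (iUnion_subset fun n x hx => hx.1)
    intro x hx
    obtain ⟨n, hn⟩ := exists_nat_ge x
    exact mem_iUnion.mpr ⟨n, hx, hn⟩
  have htend := tendsto_measure_iUnion_atTop (μ := μ) hmono
  rw [hun, mu_Ici_zero hprob hneg] at htend
  have hevent : ∀ᶠ n : ℕ in atTop, ENNReal.ofReal t < μ (Icc 0 (n:ℝ)) :=
    htend.eventually (eventually_gt_nhds (ENNReal.ofReal_lt_one.mpr ht))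
  obtain ⟨n, hn⟩ := hevent.exists
  refine ⟨n, Nat.cast_nonneg n, ?_⟩
  rcases le_or_gt t 0 with h | h
  · exact h.trans (cdfR_nonneg hprob _)
  calc t = (ENNReal.ofReal t).toReal := (ENNReal.toReal_ofReal h.le).symm
    _ ≤ (μ (Icc 0 (n:ℝ))).toReal := ENNReal.toReal_mono (measure_ne_top μ _) hn.le

include hprob hneg in
lemma quant_nonneg {t : ℝ} (ht : t < 1) : 0 ≤ quant μ t := by
  obtain ⟨x, hx⟩ := exists_cdfR_ge hprob hneg ht
  exact le_csInf ⟨x, hx⟩ fun y hy => hy.1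

include hprob hneg in
lemma cdfR_quant {t : ℝ} (ht : t < 1) : t ≤ cdfR μ (quant μ t) := by
  set Q := quant μ t with hQ
  have hne : {x : ℝ | 0 ≤ x ∧ t ≤ cdfR μ x}.Nonempty := exists_cdfR_ge hprob hneg ht
  have haux : ∀ n : ℕ, t ≤ cdfR μ (Q + 1 / (n + 1)) := by
    intro n
    have hlt : sInf {x : ℝ | 0 ≤ x ∧ t ≤ cdfR μ x} < Q + 1 / (n + 1) := by
      change quant μ t < _
      rw [← hQ]
      have : (0:ℝ) < 1 / ((n:ℝ) + 1) := by positivity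
      linarith
    obtain ⟨x, hx, hxlt⟩ := exists_lt_of_csInf_lt hne hlt
    exact hx.2.trans (cdfR_mono hprob hxlt.le)
  have hiInter : ⋂ n : ℕ, Icc (0:ℝ) (Q + 1 / (n + 1)) = Icc 0 Q := by
    apply subset_antisymm
    · intro x hx
      refine ⟨(mem_iInter.mp hx 0).1, ?_⟩
      by_contra hcon
      push_neg at hcon
      obtain ⟨n, hn⟩ := exists_nat_one_div_lt (by linarith : (0:ℝ) < x - Q)
      have : x ≤ Q + 1 / (n + 1) := (mem_iInter.mp hx n).2
      linarith
    · intro x hx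
      exact mem_iInter.mpr fun n => ⟨hx.1, by
        have : (0:ℝ) < 1 / (n + 1) := by positivity
        linarith [hx.2]⟩
  have hanti : Antitone (fun n : ℕ => Icc (0:ℝ) (Q + 1 / (n + 1))) := by
    intro n k hnk
    apply Icc_subset_Icc_right
    have h1 : (n:ℝ) + 1 ≤ (k:ℝ) + 1 := by exact_mod_cast Nat.succ_le_succ hnk
    have h2 : 1 / ((k:ℝ) + 1) ≤ 1 / ((n:ℝ) + 1) :=
      one_div_le_one_div_of_le (by positivity) h1
    linarith
  have htend := tendsto_measure_iInter_atTop (μ := μ)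
    (fun n => measurableSet_Icc.nullMeasurableSet) hanti ⟨0, measure_ne_top μ _⟩
  rw [hiInter] at htend
  have htoReal : Tendsto (fun n : ℕ => cdfR μ (Q + 1 / (n + 1))) atTop
      (𝓝 (cdfR μ Q)) := by
    have := (ENNReal.tendsto_toReal (measure_ne_top μ (Icc 0 Q))).comp htend
    exact this
  exact ge_of_tendsto htoReal (Eventually.of_forall haux)

include hprob hneg in
lemma quant_le_iff {t x : ℝ} (ht : t < 1) (hx : 0 ≤ x) :
    quant μ t ≤ x ↔ t ≤ cdfR μ x := by
  constructor
  · intro h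
    exact (cdfR_quant hprob hneg ht).trans (cdfR_mono hprob h)
  · intro h
    exact csInf_le ⟨0, fun y hy => hy.1⟩ ⟨hx, h⟩

include hprob hneg in
lemma quant_mono {s t : ℝ} (hst : s ≤ t) (ht : t < 1) : quant μ s ≤ quant μ t := by
  apply csInf_le_csInf ⟨0, fun y hy => hy.1⟩ (exists_cdfR_ge hprob hneg ht)
  rintro x ⟨hx0, hx⟩
  exact ⟨hx0, hst.trans hx⟩

include hprob hneg in
lemma quant_left_cont {t c : ℝ} (ht : t ∈ Ioo (0:ℝ) 1)
    (hc : ∀ s ∈ Ioo 0 t, quant μ s ≤ c) : quant μ t ≤ c := by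
  have ht2 : t / 2 ∈ Ioo (0:ℝ) t := ⟨by linarith [ht.1], by linarith [ht.1]⟩
  have hc0 : 0 ≤ c :=
    le_trans (quant_nonneg hprob hneg (by linarith [ht.1, ht.2] : t/2 < 1)) (hc _ ht2)
  have hFc : t ≤ cdfR μ c := by
    by_contra hcon
    push_neg at hcon
    set a : ℝ := max (cdfR μ c) 0 with ha
    have ha1 : cdfR μ c ≤ a := le_max_left _ _
    have ha2 : (0:ℝ) ≤ a := le_max_right _ _
    have ha3 : a < t := max_lt hcon ht.1
    set s : ℝ := (a + t) / 2 with hs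
    have hsI : s ∈ Ioo (0:ℝ) t := ⟨by simp only [hs]; linarith [ht.1], by simp only [hs]; linarith⟩
    have h1 : quant μ s ≤ c := hc s hsI
    have h2 : s ≤ cdfR μ c := by
      have := cdfR_quant hprob hneg (lt_trans hsI.2 ht.2)
      exact le_trans this (cdfR_mono hprob h1)
    linarith
  exact csInf_le ⟨0, fun y hy => hy.1⟩ ⟨hc0, hFc⟩

include hprob hneg in
lemma vol_quant_gt {x : ℝ} (hx : 0 ≤ x) :
    volume ({t : ℝ | x < quant μ t} ∩ Ioo 0 1) = μ (Ioi x) := by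
  have hset : {t : ℝ | x < quant μ t} ∩ Ioo 0 1 = Ioo (cdfR μ x) 1 := by
    ext t
    simp only [mem_inter_iff, mem_setOf_eq, mem_Ioo]
    constructor
    · rintro ⟨h1, h2, h3⟩
      refine ⟨?_, h3⟩
      by_contra hcon
      push_neg at hcon
      exact absurd ((quant_le_iff hprob hneg h3 hx).mpr hcon) (not_le.mpr h1)
    · rintro ⟨h1, h2⟩
      have ht0 : 0 < t := lt_of_le_of_lt (cdfR_nonneg hprob x) h1
      refine ⟨?_, ht0, h2⟩
      by_contra hcon
      push_neg at hcon
      exact absurd ((quant_le_iff hprob hneg h2 hx).mp hcon) (not_le.mpr h1)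
  rw [hset, Real.volume_Ioo]
  have hIic := mu_Iic_eq hprob hneg hx
  have hcompl := measure_compl (measurableSet_Iic (a := x)) (measure_ne_top μ _)
  rw [compl_Iic, measure_univ, hIic] at hcompl
  rw [hcompl, cdfR]
  rw [ENNReal.ofReal_sub _ ENNReal.toReal_nonneg, ENNReal.ofReal_one,
    ENNReal.ofReal_toReal (measure_ne_top μ _)]

include hprob hneg in
lemma quant_aemeas : AEMeasurable (quant μ) (volume.restrict (Ioo (0:ℝ) 1)) :=
  aemeasurable_restrict_of_monotoneOn measurableSet_Ioo
    (fun s hs t ht hst => quant_mono hprob hneg hst ht.2)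

include hprob hneg in
lemma quant_ae_nonneg : 0 ≤ᵐ[volume.restrict (Ioo (0:ℝ) 1)] quant μ :=
  (ae_restrict_iff' measurableSet_Ioo).mpr
    (ae_of_all _ fun t ht => quant_nonneg hprob hneg ht.2)

include hprob hneg hint in
lemma lint_quant : ∫⁻ t in Ioo (0:ℝ) 1, ENNReal.ofReal (quant μ t) =
    ENNReal.ofReal (mMean μ) := by
  have hid_nonneg : 0 ≤ᵐ[μ] id := by
    rw [Filter.EventuallyLE, ae_iff]
    convert hneg using 2
    ext y
    simp [not_le]
  rw [lintegral_eq_lintegral_meas_lt _ (quant_ae_nonneg hprob hneg)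
    (quant_aemeas hprob hneg)]
  have hRHS : ENNReal.ofReal (mMean μ) = ∫⁻ y, ENNReal.ofReal (id y) ∂μ :=
    ofReal_integral_eq_lintegral_ofReal hint hid_nonneg
  rw [hRHS, lintegral_eq_lintegral_meas_lt μ hid_nonneg aemeasurable_id]
  apply setLIntegral_congr_fun measurableSet_Ioi
  intro x hx
  dsimp only
  rw [Measure.restrict_apply' measurableSet_Ioo, vol_quant_gt hprob hneg (le_of_lt hx)]
  rfl

include hprob hneg hint in
lemma integrableOn_quant : IntegrableOn (quant μ) (Ioo (0:ℝ) 1) volume := by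
  refine ⟨(quant_aemeas hprob hneg).aestronglyMeasurable, ?_⟩
  rw [hasFiniteIntegral_iff_ofReal (quant_ae_nonneg hprob hneg),
    lint_quant hprob hneg hint]
  exact ENNReal.ofReal_lt_top

include hprob hneg hint in
lemma intervalIntegrable_quant {a b : ℝ} (ha : 0 ≤ a) (hab : a ≤ b) (hb : b ≤ 1) :
    IntervalIntegrable (quant μ) volume a b := by
  rw [intervalIntegrable_iff, uIoc_of_le hab]
  have h1 : IntegrableOn (quant μ) (Ioo a b) volume :=
    (integrableOn_quant hprob hneg hint).mono_set
      (fun x hx => ⟨lt_of_le_of_lt ha hx.1, lt_of_lt_of_le hx.2 hb⟩)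
  exact h1.congr_set_ae Ioo_ae_eq_Ioc.symm

include hprob hneg in
lemma ofReal_cdfR_eq {x : ℝ} (hx : 0 ≤ x) :
    ENNReal.ofReal (cdfR μ x) = volume ({t : ℝ | quant μ t ≤ x} ∩ Ioo 0 1) := by
  have hset : {t : ℝ | quant μ t ≤ x} ∩ Ioo 0 1 = Ioo 0 1 ∩ Iic (cdfR μ x) := by
    ext t
    simp only [mem_inter_iff, mem_setOf_eq, mem_Ioo, mem_Iic]
    constructor
    · rintro ⟨h1, h2⟩
      exact ⟨h2, (quant_le_iff hprob hneg h2.2 hx).mp h1⟩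
    · rintro ⟨h1, h2⟩
      exact ⟨(quant_le_iff hprob hneg h1.2 hx).mpr h2, h1⟩
  rw [hset]
  rcases lt_or_ge (cdfR μ x) 1 with h | h
  · have : Ioo (0:ℝ) 1 ∩ Iic (cdfR μ x) = Ioc 0 (cdfR μ x) := by
      ext t
      simp only [mem_inter_iff, mem_Ioo, mem_Iic, mem_Ioc]
      exact ⟨fun ⟨h1, h2⟩ => ⟨h1.1, h2⟩, fun ⟨h1, h2⟩ => ⟨⟨h1, lt_of_le_of_lt h2 h⟩, h2⟩⟩
    rw [this, Real.volume_Ioc, sub_zero]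
  · have h1 : cdfR μ x = 1 := le_antisymm (cdfR_le_one hprob x) h
    have : Ioo (0:ℝ) 1 ∩ Iic (cdfR μ x) = Ioo 0 1 := by
      rw [h1]
      exact inter_eq_left.mpr fun t ht => ht.2.le
    rw [this, h1, Real.volume_Ioo, sub_zero]

end Inverse

/-- For `ℓ` continuous convex on `[0,1]` with values in `[0,1]`,
`ℓ(0)=0`, `ℓ(1)=1`, and `m>0`, the pushforward `μ` of Lebesgue measure on `[0,1)` by
`p ↦ m·∂₋ℓ(p)` belongs to `𝐌`, has mean `m` and Lorenz function `ℓ`; consequently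
`μ ↦ (L_μ, m_μ)` is a bijection from `𝐌` onto `𝔏 × (0,∞)`. -/
theorem lorenz_mean_bijective (ℓ : ℝ → ℝ) (m : ℝ)
    (hcont : ContinuousOn ℓ (Set.Icc 0 1))
    (hconv : ConvexOn ℝ (Set.Icc 0 1) ℓ)
    (hmaps : Set.MapsTo ℓ (Set.Icc 0 1) (Set.Icc 0 1))
    (h0 : ℓ 0 = 0) (h1 : ℓ 1 = 1) (hm : 0 < m) :
    (MemM (muOf ℓ m) ∧ mMean (muOf ℓ m) = m ∧
      ∀ p ∈ Set.Icc (0:ℝ) 1, lorenz (muOf ℓ m) p = ℓ p) ∧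
    (∀ μ ν : Measure ℝ, MemM μ → MemM ν →
      (∀ p ∈ Set.Icc (0:ℝ) 1, lorenz μ p = lorenz ν p) → mMean μ = mMean ν → μ = ν) := by
  have hnn : ∀ x ∈ Set.Icc (0:ℝ) 1, 0 ≤ ℓ x := fun x hx => (hmaps hx).1
  constructor
  · have hprob : IsProbabilityMeasure (muOf ℓ m) := muOf_prob hconv h0 hnn
    refine ⟨⟨hprob, muOf_neg hconv h0 hnn hm, muOf_integrable_id hconv hcont h0 h1 hnn, ?_⟩,
      muOf_mean hconv hcont h0 h1 hnn, fun p hp => lorenz_muOf hconv hcont h0 h1 hnn hm hp⟩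
    rw [muOf_mean hconv hcont h0 h1 hnn]
    exact hm
  · rintro μ ν ⟨hprobμ, hnegμ, hintμ, hmeanμ⟩ ⟨hprobν, hnegν, hintν, hmeanν⟩ hlor hmean
    have hc : mMean μ ≠ 0 := hmeanμ.ne'
    have hI : ∀ p ∈ Set.Icc (0:ℝ) 1,
        (∫ t in (0:ℝ)..p, quant μ t) = ∫ t in (0:ℝ)..p, quant ν t := by
      intro p hp
      have hl := hlor p hp
      rw [lorenz, lorenz, ← hmean] at hl
      have h2 := (div_eq_div_iff hc hc).mp hl
      exact mul_right_cancel₀ hc h2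
    have hIab : ∀ a b : ℝ, 0 ≤ a → a ≤ b → b ≤ 1 →
        (∫ t in a..b, quant μ t) = ∫ t in a..b, quant ν t := by
      intro a b ha hab hb
      have e1 := intervalIntegral.integral_interval_sub_left
        (intervalIntegrable_quant hprobμ hnegμ hintμ le_rfl (ha.trans hab) hb)
        (intervalIntegrable_quant hprobμ hnegμ hintμ le_rfl ha (hab.trans hb))
      have e2 := intervalIntegral.integral_interval_sub_left
        (intervalIntegrable_quant hprobν hnegν hintν le_rfl (ha.trans hab) hb)
        (intervalIntegrable_quant hprobν hnegν hintν le_rfl ha (hab.trans hb))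
      rw [← e1, ← e2, hI b ⟨ha.trans hab, hb⟩, hI a ⟨ha, hab.trans hb⟩]
    have hcross : ∀ (κ τ : Measure ℝ), IsProbabilityMeasure κ → κ {x | x < 0} = 0 →
        Integrable id κ → IsProbabilityMeasure τ → τ {x | x < 0} = 0 → Integrable id τ →
        (∀ a b : ℝ, 0 ≤ a → a ≤ b → b ≤ 1 →
          (∫ t in a..b, quant κ t) = ∫ t in a..b, quant τ t) →
        ∀ t t' : ℝ, 0 < t → t < t' → t' < 1 → quant κ t ≤ quant τ t' := by
      intro κ τ hpκ hnκ hiκ hpτ hnτ hiτ hab t t' ht htt' ht'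
      have hconstInt : IntegrableOn (fun _ : ℝ => quant κ t) (Set.Ioc t t') volume :=
        (integrableOn_const_iff).mpr (Or.inr (by rw [Real.volume_Ioc]; exact ENNReal.ofReal_lt_top))
      have hconstInt' : IntegrableOn (fun _ : ℝ => quant τ t') (Set.Ioc t t') volume :=
        (integrableOn_const_iff).mpr (Or.inr (by rw [Real.volume_Ioc]; exact ENNReal.ofReal_lt_top))
      have hQκInt : IntegrableOn (quant κ) (Set.Ioc t t') volume :=
        (intervalIntegrable_quant hpκ hnκ hiκ ht.le htt'.le ht'.le).1
      have hQτInt : IntegrableOn (quant τ) (Set.Ioc t t') volume :=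
        (intervalIntegrable_quant hpτ hnτ hiτ ht.le htt'.le ht'.le).1
      have hlow : (t' - t) * quant κ t ≤ ∫ s in t..t', quant κ s := by
        rw [intervalIntegral.integral_of_le htt'.le]
        have hconst : ∫ _ in Set.Ioc t t', quant κ t ∂volume = (t' - t) * quant κ t := by
          rw [setIntegral_const, Real.volume_real_Ioc_of_le htt'.le, smul_eq_mul]
        rw [← hconst]
        refine setIntegral_mono_on hconstInt hQκInt measurableSet_Ioc ?_
        intro x hx
        exact quant_mono hpκ hnκ hx.1.le (lt_of_le_of_lt hx.2 ht')
      have hhigh : (∫ s in t..t', quant τ s) ≤ (t' - t) * quant τ t' := by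
        rw [intervalIntegral.integral_of_le htt'.le]
        have hconst : ∫ _ in Set.Ioc t t', quant τ t' ∂volume = (t' - t) * quant τ t' := by
          rw [setIntegral_const, Real.volume_real_Ioc_of_le htt'.le, smul_eq_mul]
        rw [← hconst]
        refine setIntegral_mono_on hQτInt hconstInt' measurableSet_Ioc ?_
        intro x hx
        exact quant_mono hpτ hnτ hx.2 ht'
      have hkey : (t' - t) * quant κ t ≤ (t' - t) * quant τ t' := by
        calc (t' - t) * quant κ t ≤ ∫ s in t..t', quant κ s := hlow
          _ = ∫ s in t..t', quant τ s := hab t t' ht.le htt'.le ht'.le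
          _ ≤ (t' - t) * quant τ t' := hhigh
      exact le_of_mul_le_mul_left (by linarith [hkey]) (by linarith : (0:ℝ) < t' - t)
    have hQeq : ∀ t ∈ Set.Ioo (0:ℝ) 1, quant μ t = quant ν t := by
      intro t ht
      have h2 : quant μ t ≤ quant ν t :=
        quant_left_cont hprobμ hnegμ ht fun s hs =>
          hcross μ ν hprobμ hnegμ hintμ hprobν hnegν hintν hIab s t hs.1 hs.2 ht.2
      have h1 : quant ν t ≤ quant μ t :=
        quant_left_cont hprobν hnegν ht fun s hs =>
          hcross ν μ hprobν hnegν hintν hprobμ hnegμ hintμ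
            (fun a b ha hab hb => (hIab a b ha hab hb).symm) s t hs.1 hs.2 ht.2
      exact le_antisymm h2 h1
    have hIcc : ∀ x : ℝ, μ (Set.Icc 0 x) = ν (Set.Icc 0 x) := by
      intro x
      rcases lt_or_ge x 0 with hx | hx
      · have hempty : Set.Icc (0:ℝ) x = ∅ := Set.Icc_eq_empty (by linarith)
        simp [hempty]
      · have e1 := ofReal_cdfR_eq hprobμ hnegμ hx
        have e2 := ofReal_cdfR_eq hprobν hnegν hx
        have hsets : {t : ℝ | quant μ t ≤ x} ∩ Set.Ioo 0 1
            = {t : ℝ | quant ν t ≤ x} ∩ Set.Ioo 0 1 := by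
          ext t
          simp only [Set.mem_inter_iff, Set.mem_setOf_eq]
          constructor
          · rintro ⟨h1, h2⟩
            exact ⟨by rw [← hQeq t h2]; exact h1, h2⟩
          · rintro ⟨h1, h2⟩
            exact ⟨by rw [hQeq t h2]; exact h1, h2⟩
        rw [hsets, ← e2] at e1
        have hFeq : cdfR μ x = cdfR ν x := by
          have h3 := congrArg ENNReal.toReal e1
          rwa [ENNReal.toReal_ofReal (cdfR_nonneg hprobμ x),
            ENNReal.toReal_ofReal (cdfR_nonneg hprobν x)] at h3
        exact (ENNReal.toReal_eq_toReal_iff' (measure_ne_top μ _) (measure_ne_top ν _)).mp hFeq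
    apply MeasureTheory.Measure.ext_of_Iic
    intro x
    rcases lt_or_ge x 0 with hx | hx
    · have hμ0 : μ (Set.Iic x) = 0 :=
        measure_mono_null (fun y hy => lt_of_le_of_lt hy hx) hnegμ
      have hν0 : ν (Set.Iic x) = 0 :=
        measure_mono_null (fun y hy => lt_of_le_of_lt hy hx) hnegν
      rw [hμ0, hν0]
    · rw [mu_Iic_eq hprobμ hnegμ hx, mu_Iic_eq hprobν hnegν hx, hIcc]
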